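/- Let G be a group and K a normal subgroup of G of finite index. If G is not icc, then either K is not icc, or there exist g ∈ G \ K and h ∈ K such that g⁻¹kg = h⁻¹kh for all k ∈ K (i.e. the natural homomorphism θ : G/K → Out(K) is not injective). -/

import Mathlib

/-- A group is *icc* (with infinite conjugacy classes) if it is nontrivial and the
conjugacy class of every nontrivial element is infinite. -/
def IsICC (G : Type*) [Group G] : Prop :=
  Nontrivial G ∧ ∀ g : G, g ≠ 1 → {h : G | ∃ x : G, x⁻¹ * g * x = h}.Infinite

/-- If the centralizer of `t` has finite index, the conjugacy class of `t` is finite. -/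
lemma class_finite_of_centralizer_finiteIndex {H : Type*} [Group H] (t : H)
    (hC : (Subgroup.centralizer ({t} : Set H)).FiniteIndex) :
    {h : H | ∃ x : H, x⁻¹ * t * x = h}.Finite := by
  haveI := hC
  have hwd : ∀ (a b : H),
      @Setoid.r _ (QuotientGroup.leftRel (Subgroup.centralizer ({t} : Set H))) a b →
      (fun x : H => x * t * x⁻¹) a = (fun x : H => x * t * x⁻¹) b := by
    intro a b hab
    rw [QuotientGroup.leftRel_apply] at hab
    have hc : t * (a⁻¹ * b) = (a⁻¹ * b) * t :=
      (Subgroup.mem_centralizer_iff.mp hab) t rfl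
    have h1 : a⁻¹ * b * t * (a⁻¹ * b)⁻¹ = t := by
      rw [← hc]; group
    show a * t * a⁻¹ = b * t * b⁻¹
    calc a * t * a⁻¹ = a * (a⁻¹ * b * t * (a⁻¹ * b)⁻¹) * a⁻¹ := by rw [h1]
      _ = b * t * b⁻¹ := by group
  have hset : {h : H | ∃ x : H, x⁻¹ * t * x = h} =
      Set.range (fun q : H ⧸ Subgroup.centralizer ({t} : Set H) =>
        Quotient.liftOn' q (fun x => x * t * x⁻¹) hwd) := by
    ext h
    simp only [Set.mem_setOf_eq, Set.mem_range]
    constructor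
    · rintro ⟨x, rfl⟩
      exact ⟨Quotient.mk'' x⁻¹, by simp [Quotient.liftOn'_mk'']⟩
    · rintro ⟨q, rfl⟩
      induction q using Quotient.inductionOn' with
      | h x => exact ⟨x⁻¹, by simp [Quotient.liftOn'_mk'']⟩
  rw [hset]
  exact Set.finite_range _

/-- If the conjugacy class of `t` is not infinite, the centralizer of `t` has
finite index. -/
lemma centralizer_finiteIndex_of_not_infinite {H : Type*} [Group H] (t : H)
    (hfin : ¬ {h : H | ∃ x : H, x⁻¹ * t * x = h}.Infinite) :
    (Subgroup.centralizer ({t} : Set H)).FiniteIndex := by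
  have horb : (MulAction.orbit (ConjAct H) t) = {h : H | ∃ x : H, x⁻¹ * t * x = h} := by
    ext h
    rw [ConjAct.mem_orbit_conjAct]
    constructor
    · intro hc
      obtain ⟨c, hc⟩ := isConj_iff.mp hc
      exact ⟨c, by rw [← hc]; group⟩
    · rintro ⟨x, rfl⟩
      exact isConj_iff.mpr ⟨x, by group⟩
  have hofin : (MulAction.orbit (ConjAct H) t).Finite := by
    rw [horb]; exact Set.not_infinite.mp hfin
  have hne : (MulAction.stabilizer (ConjAct H) t).index ≠ 0 := by
    rw [MulAction.index_stabilizer]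
    exact ((Set.ncard_pos hofin).mpr ⟨t, MulAction.mem_orbit_self t⟩).ne'
  rw [Subgroup.centralizer_eq_comap_stabilizer]
  constructor
  exact (Subgroup.index_comap_of_surjective _ ConjAct.toConjAct.surjective).trans_ne hne

/-- If G is not icc then either K is not icc or some g ∉ K acts on K as an inner
automorphism. -/
theorem stmt_3 {G : Type*} [Group G] (K : Subgroup G) [K.Normal] [K.FiniteIndex]
    (hG : ¬ IsICC G) :
    ¬ IsICC K ∨ ∃ g : G, g ∉ K ∧ ∃ h ∈ K, ∀ k ∈ K, g⁻¹ * k * g = h⁻¹ * k * h := by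
  by_contra hcon
  push_neg at hcon
  obtain ⟨⟨hKnt, hKicc⟩, hno⟩ := hcon
  apply hG
  constructor
  · obtain ⟨a, b, hab⟩ := hKnt
    exact ⟨a, b, fun h => hab (Subtype.coe_injective h)⟩
  intro g hg1
  by_contra hSinf
  haveI hCfi : (Subgroup.centralizer ({g} : Set G)).FiniteIndex :=
    centralizer_finiteIndex_of_not_infinite g hSinf
  by_cases hgK : g ∈ K
  · -- g ∈ K : use icc of K
    have hgk1 : (⟨g, hgK⟩ : K) ≠ 1 := by
      intro h
      exact hg1 (by simpa using congrArg Subtype.val h)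
    have hinf := hKicc ⟨g, hgK⟩ hgk1
    have himg : (Subtype.val '' {h : K | ∃ x : K, x⁻¹ * (⟨g, hgK⟩ : K) * x = h}).Infinite :=
      hinf.image (Set.injOn_of_injective Subtype.coe_injective)
    apply hSinf
    refine himg.mono ?_
    rintro _ ⟨kk, ⟨x, hx⟩, rfl⟩
    exact ⟨(x : G), by simpa using congrArg Subtype.val hx⟩
  · -- g ∉ K : show g acts trivially on K, contradiction
    obtain ⟨k0, hk0K, hk0⟩ := hno g hgK 1 (one_mem K)
    apply hk0
    simp only [inv_one, one_mul, mul_one]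
    -- show g⁻¹ * k0 * g = k0, via general claim
    suffices hclaim : ∀ k ∈ K, g⁻¹ * k * g = k from hclaim k0 hk0K
    intro k hk
    set C := Subgroup.centralizer ({g} : Set G) with hCdef
    haveI hcomapfi : (C.comap (MulAut.conj k).toMonoidHom).FiniteIndex := by
      constructor
      rw [Subgroup.index_comap_of_surjective _ (MulAut.conj k).surjective]
      exact hCfi.index_ne_zero
    set D := C ⊓ C.comap (MulAut.conj k).toMonoidHom with hDdef
    haveI : D.FiniteIndex := by infer_instance
    haveI : (D.subgroupOf K).FiniteIndex := Subgroup.instFiniteIndex_subgroupOf D K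
    have hmem : (g⁻¹ * k * g)⁻¹ * k ∈ K := by
      have : g⁻¹ * k * g ∈ K := by
        simpa using (‹K.Normal›.conj_mem k hk g⁻¹)
      exact K.mul_mem (K.inv_mem this) hk
    set t : K := ⟨(g⁻¹ * k * g)⁻¹ * k, hmem⟩ with htdef
    have hle : D.subgroupOf K ≤ Subgroup.centralizer ({t} : Set K) := by
      intro c hc
      rw [Subgroup.mem_subgroupOf] at hc
      obtain ⟨hc1, hc2⟩ := hc
      rw [Subgroup.mem_centralizer_iff]
      intro s hs
      rw [Set.mem_singleton_iff] at hs
      subst hs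
      have h1 : g * (c : G) = (c : G) * g := Subgroup.mem_centralizer_iff.mp hc1 g rfl
      have h2 : g * (k * (c : G) * k⁻¹) = (k * (c : G) * k⁻¹) * g := by
        have := Subgroup.mem_centralizer_iff.mp (Subgroup.mem_comap.mp hc2) g rfl
        simpa [MulAut.conj_apply] using this
      have h1' : g⁻¹ * (c : G) = (c : G) * g⁻¹ := by
        calc g⁻¹ * (c : G) = g⁻¹ * ((c : G) * g) * g⁻¹ := by group
          _ = g⁻¹ * (g * (c : G)) * g⁻¹ := by rw [h1]
          _ = (c : G) * g⁻¹ := by group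
      have key : k⁻¹ * g * k * (c : G) = (c : G) * (k⁻¹ * g * k) := by
        calc k⁻¹ * g * k * (c : G) = k⁻¹ * (g * (k * (c : G) * k⁻¹)) * k := by group
          _ = k⁻¹ * ((k * (c : G) * k⁻¹) * g) * k := by rw [h2]
          _ = (c : G) * (k⁻¹ * g * k) := by group
      apply Subtype.ext
      push_cast
      show (g⁻¹ * k * g)⁻¹ * k * (c : G) = (c : G) * ((g⁻¹ * k * g)⁻¹ * k)
      calc (g⁻¹ * k * g)⁻¹ * k * (c : G)
          = g⁻¹ * (k⁻¹ * g * k * (c : G)) := by group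
        _ = g⁻¹ * ((c : G) * (k⁻¹ * g * k)) := by rw [key]
        _ = (g⁻¹ * (c : G)) * (k⁻¹ * g * k) := by group
        _ = ((c : G) * g⁻¹) * (k⁻¹ * g * k) := by rw [h1']
        _ = (c : G) * ((g⁻¹ * k * g)⁻¹ * k) := by group
    haveI : (Subgroup.centralizer ({t} : Set K)).FiniteIndex :=
      Subgroup.finiteIndex_of_le hle
    have hfin := class_finite_of_centralizer_finiteIndex t this
    have ht1 : t = 1 := by
      by_contra ht
      exact (hKicc t ht) hfin
    have : (g⁻¹ * k * g)⁻¹ * k = 1 := by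
      simpa [htdef] using congrArg Subtype.val ht1
    have := inv_mul_eq_one.mp this
    exact this
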